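/- With no ties among the y-values (distinct y_i), Chatterjee's coefficient ξ_n(x,y) = 1 - 3·Σ_{i=1}^{n-1}|r_{i+1}-r_i| / (n²-1) is at most (n-2)/(n+1), with equality if and only if the ranks r_i are sorted in ascending or descending order. -/

import Mathlib

lemma aux_one_le_abs (a b : ℕ) (h : a ≠ b) : (1:ℝ) ≤ |(a:ℝ) - (b:ℝ)| := by
  rcases h.lt_or_gt with h | h
  · have : (a:ℝ) + 1 ≤ b := by exact_mod_cast h
    rw [abs_sub_comm, abs_of_nonneg (by linarith)]; linarith
  · have : (b:ℝ) + 1 ≤ a := by exact_mod_cast h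
    rw [abs_of_nonneg (by linarith)]; linarith

lemma aux_abs_eq_one (a b : ℕ) (h : |(a:ℝ) - (b:ℝ)| = 1) : a = b + 1 ∨ b = a + 1 := by
  rcases (abs_eq (by norm_num : (0:ℝ) ≤ 1)).mp h with h | h
  · left; have : (a:ℝ) = (b:ℝ) + 1 := by linarith
    exact_mod_cast this
  · right; have : (b:ℝ) = (a:ℝ) + 1 := by linarith
    exact_mod_cast this

lemma aux_abs_of_succ (a b : ℕ) (h : a = b + 1) : |(a:ℝ) - (b:ℝ)| = 1 := by
  subst h; push_cast; rw [abs_of_nonneg (by linarith)]; ring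

lemma aux_le_apply {n : ℕ} (f : Fin n → Fin n) (hf : StrictMono f) :
    ∀ k (hk : k < n), k ≤ (f ⟨k, hk⟩ : ℕ) := by
  intro k
  induction k with
  | zero => intro hk; exact Nat.zero_le _
  | succ m ih =>
    intro hk
    have hm : m < n := by omega
    have h1 := ih hm
    have h2 : f ⟨m, hm⟩ < f ⟨m+1, hk⟩ := hf (by simp [Fin.lt_def])
    rw [Fin.lt_def] at h2
    omega

lemma aux_mono_eq_id {n : ℕ} (f : Fin n → Fin n) (hm : Monotone f)
    (hb : Function.Bijective f) (i : Fin n) : f i = i := by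
  have hsm : StrictMono f := hm.strictMono_of_injective hb.1
  let e := StrictMono.orderIsoOfSurjective f hsm hb.2
  have hsymm : StrictMono (e.symm : Fin n → Fin n) := e.symm.strictMono
  have h1 : (i : ℕ) ≤ (f i : ℕ) := by
    have := aux_le_apply f hsm i.1 i.isLt; simpa using this
  have h2 : (f i : ℕ) ≤ (i : ℕ) := by
    have h3 : ((f i : Fin n) : ℕ) ≤ (e.symm (f i) : ℕ) := by
      have := aux_le_apply _ hsymm (f i).1 (f i).isLt
      simpa using this
    have he : e.symm (f i) = i := StrictMono.orderIsoOfSurjective_symm_apply_self f hsm hb.2 i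
    rw [he] at h3
    exact h3
  exact Fin.ext (le_antisymm h2 h1)

theorem xi_le_max_of_no_ties
    (n : ℕ) (hn : 2 ≤ n) (r : Fin n → Fin n) (hr : Function.Bijective r) :
    1 - 3 * (∑ i : Fin (n - 1),
        |((r (Fin.castLE (by omega) i.succ) : ℕ) : ℝ) -
          ((r (Fin.castLE (by omega) i.castSucc) : ℕ) : ℝ)|) / ((n : ℝ) ^ 2 - 1) ≤
      ((n : ℝ) - 2) / ((n : ℝ) + 1) ∧
    ((1 - 3 * (∑ i : Fin (n - 1),
        |((r (Fin.castLE (by omega) i.succ) : ℕ) : ℝ) -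
          ((r (Fin.castLE (by omega) i.castSucc) : ℕ) : ℝ)|) / ((n : ℝ) ^ 2 - 1) =
        ((n : ℝ) - 2) / ((n : ℝ) + 1)) ↔
      (Monotone r ∨ Antitone r)) := by
  have hnR : (2:ℝ) ≤ (n:ℝ) := by exact_mod_cast hn
  have hd : (0:ℝ) < (n:ℝ)^2 - 1 := by nlinarith
  have hn1 : (0:ℝ) < (n:ℝ) + 1 := by linarith
  set T : Fin (n-1) → ℝ := fun i =>
    |((r (Fin.castLE (by omega) i.succ) : ℕ) : ℝ) -
      ((r (Fin.castLE (by omega) i.castSucc) : ℕ) : ℝ)| with hT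
  set S : ℝ := ∑ i, T i with hS
  -- each term is at least 1
  have hne : ∀ i : Fin (n-1),
      (r (Fin.castLE (by omega) i.succ) : ℕ) ≠ (r (Fin.castLE (by omega) i.castSucc) : ℕ) := by
    intro i hcontra
    have h1 : (Fin.castLE (by omega) i.succ : Fin n) = Fin.castLE (by omega) i.castSucc :=
      hr.1 (Fin.ext hcontra)
    have h2 := Fin.castLE_injective (by omega : n - 1 + 1 ≤ n) h1
    exact absurd h2 (Fin.castSucc_lt_succ : i.castSucc < i.succ).ne'
  have hterm1 : ∀ i ∈ Finset.univ, (1:ℝ) ≤ T i := fun i _ => aux_one_le_abs _ _ (hne i)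
  have hcard : ((n:ℕ) - 1 : ℕ) = ((n:ℝ) - 1 : ℝ) := by
    push_cast [Nat.cast_sub (by omega : 1 ≤ n)]; ring
  have hsum1 : (∑ _i : Fin (n-1), (1:ℝ)) = (n:ℝ) - 1 := by
    rw [Finset.sum_const, Finset.card_univ, Fintype.card_fin, nsmul_eq_mul, mul_one, hcard]
  have hSge : (n:ℝ) - 1 ≤ S := by
    rw [hS, ← hsum1]; exact Finset.sum_le_sum hterm1
  have hSeq_iff : S = (n:ℝ) - 1 ↔ ∀ i : Fin (n-1), T i = 1 := by
    constructor
    · intro h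
      have h' : (∑ _i : Fin (n-1), (1:ℝ)) = ∑ i, T i := by rw [hsum1, ← hS, h]
      have := (Finset.sum_eq_sum_iff_of_le hterm1).mp h'
      intro i; exact (this i (Finset.mem_univ i)).symm
    · intro h
      rw [hS, Finset.sum_congr rfl (fun i _ => h i), hsum1]
  -- cast the step hypothesis to ℕ
  have hcastsucc : ∀ (k : ℕ) (hk' : k < n - 1) (hk : k + 1 < n),
      (Fin.castLE (by omega : n - 1 + 1 ≤ n) ((⟨k, hk'⟩ : Fin (n-1)).succ) : Fin n) = ⟨k+1, hk⟩ ∧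
      (Fin.castLE (by omega : n - 1 + 1 ≤ n) ((⟨k, hk'⟩ : Fin (n-1)).castSucc) : Fin n)
        = ⟨k, by omega⟩ := by
    intro k hk' hk
    constructor <;> (apply Fin.ext; simp)
  -- the combinatorial heart
  have hkey : (∀ i : Fin (n-1), T i = 1) ↔ (Monotone r ∨ Antitone r) := by
    constructor
    · intro h
      have hstep : ∀ k (hk : k + 1 < n),
          (r ⟨k+1, hk⟩ : ℕ) = (r ⟨k, by omega⟩ : ℕ) + 1 ∨
          (r ⟨k, by omega⟩ : ℕ) = (r ⟨k+1, hk⟩ : ℕ) + 1 := by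
        intro k hk
        have hk' : k < n - 1 := by omega
        have ht := h ⟨k, hk'⟩
        simp only [hT] at ht
        obtain ⟨e1, e2⟩ := hcastsucc k hk' hk
        rw [e1, e2] at ht
        exact aux_abs_eq_one _ _ ht
      have hinj : ∀ (a b : ℕ) (ha : a < n) (hb : b < n),
          (r ⟨a, ha⟩ : ℕ) = (r ⟨b, hb⟩ : ℕ) → a = b := by
        intro a b ha hb hab
        have := hr.1 (Fin.ext hab)
        exact congrArg Fin.val this
      have hval_eq : ∀ (a b : ℕ) (ha : a < n) (hb : b < n), a = b →
          (r ⟨a, ha⟩ : ℕ) = (r ⟨b, hb⟩ : ℕ) := by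
        intro a b ha hb hab
        subst hab; rfl
      rcases hstep 0 (by omega) with h0 | h0
      · -- ascending run
        left
        have hval : ∀ k, ∀ (hk : k < n), (r ⟨k, hk⟩ : ℕ) = (r ⟨0, by omega⟩ : ℕ) + k := by
          intro k
          induction k using Nat.strong_induction_on with
          | _ k ih =>
            intro hk
            match k with
            | 0 => simp
            | 1 =>
              have eb := hval_eq (0+1) 1 (by omega) hk rfl
              have eb0 := hval_eq 0 0 (by omega) (by omega) rfl
              omega
            | (m+2) =>
              have hm1 : m + 1 < n := by omega
              have hm : m < n := by omega
              have v1 : (r ⟨m+1, hm1⟩ : ℕ) = (r ⟨0, by omega⟩ : ℕ) + (m+1) :=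
                ih (m+1) (by omega) hm1
              have v0 : (r ⟨m, hm⟩ : ℕ) = (r ⟨0, by omega⟩ : ℕ) + m :=
                ih m (by omega) hm
              have eb := hval_eq (m+1+1) (m+2) (by omega) hk rfl
              have eb1 := hval_eq (m+1) (m+1) (by omega) hm1 rfl
              rcases hstep (m+1) hk with hs | hs
              · omega
              · exfalso
                have : (r ⟨m+2, hk⟩ : ℕ) = (r ⟨m, hm⟩ : ℕ) := by omega
                have := hinj _ _ _ _ this
                omega
        intro a b hab
        rw [Fin.le_def]
        have va : (r a : ℕ) = (r ⟨0, by omega⟩ : ℕ) + a := by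
          have := hval a.1 a.isLt; simpa using this
        have vb : (r b : ℕ) = (r ⟨0, by omega⟩ : ℕ) + b := by
          have := hval b.1 b.isLt; simpa using this
        rw [Fin.le_def] at hab
        omega
      · -- descending run
        right
        have hval : ∀ k, ∀ (hk : k < n), (r ⟨k, hk⟩ : ℕ) + k = (r ⟨0, by omega⟩ : ℕ) := by
          intro k
          induction k using Nat.strong_induction_on with
          | _ k ih =>
            intro hk
            match k with
            | 0 => simp
            | 1 =>
              have eb := hval_eq (0+1) 1 (by omega) hk rfl
              have eb0 := hval_eq 0 0 (by omega) (by omega) rfl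
              omega
            | (m+2) =>
              have hm1 : m + 1 < n := by omega
              have hm : m < n := by omega
              have v1 : (r ⟨m+1, hm1⟩ : ℕ) + (m+1) = (r ⟨0, by omega⟩ : ℕ) :=
                ih (m+1) (by omega) hm1
              have v0 : (r ⟨m, hm⟩ : ℕ) + m = (r ⟨0, by omega⟩ : ℕ) :=
                ih m (by omega) hm
              have eb := hval_eq (m+1+1) (m+2) (by omega) hk rfl
              have eb1 := hval_eq (m+1) (m+1) (by omega) hm1 rfl
              rcases hstep (m+1) hk with hs | hs
              · exfalso
                have : (r ⟨m+2, hk⟩ : ℕ) = (r ⟨m, hm⟩ : ℕ) := by omega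
                have := hinj _ _ _ _ this
                omega
              · omega
        intro a b hab
        rw [Fin.le_def]
        have va : (r a : ℕ) + a = (r ⟨0, by omega⟩ : ℕ) := by
          have := hval a.1 a.isLt; simpa using this
        have vb : (r b : ℕ) + b = (r ⟨0, by omega⟩ : ℕ) := by
          have := hval b.1 b.isLt; simpa using this
        rw [Fin.le_def] at hab
        omega
    · rintro (h | h) i
      · -- monotone: r = id
        have hid : ∀ j : Fin n, r j = j := aux_mono_eq_id r h hr
        simp only [hT]
        have hi : (i : ℕ) + 1 < n := by omega
        obtain ⟨e1, e2⟩ := hcastsucc i.1 i.isLt hi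
        have : (⟨i.1, i.isLt⟩ : Fin (n-1)) = i := rfl
        rw [this] at e1 e2
        rw [e1, e2, hid, hid]
        exact aux_abs_of_succ _ _ rfl
      · -- antitone: r ∘ rev-trick
        have h' : Monotone (fun j => (r j).rev) := by
          intro a b hab
          exact Fin.rev_le_rev.mpr (h hab)
        have hb' : Function.Bijective (fun j : Fin n => (r j).rev) :=
          (Fin.rev_bijective).comp hr
        have hid := aux_mono_eq_id _ h' hb'
        have hval : ∀ j : Fin n, (r j : ℕ) = n - 1 - j := by
          intro j
          have := hid j
          have h2 : r j = j.rev := by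
            rw [← Fin.rev_rev (r j), this]
          rw [h2, Fin.val_rev]
          omega
        simp only [hT]
        have hi : (i : ℕ) + 1 < n := by omega
        obtain ⟨e1, e2⟩ := hcastsucc i.1 i.isLt hi
        have : (⟨i.1, i.isLt⟩ : Fin (n-1)) = i := rfl
        rw [this] at e1 e2
        rw [e1, e2, hval, hval]
        rw [abs_sub_comm]
        apply aux_abs_of_succ
        simp only
        omega
  -- algebra
  have hLHS : 1 - 3 * S / ((n:ℝ)^2 - 1) = ((n:ℝ)^2 - 1 - 3 * S) / ((n:ℝ)^2 - 1) := by
    field_simp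
  constructor
  · rw [hLHS, div_le_div_iff₀ hd hn1]
    nlinarith [mul_nonneg (by linarith : (0:ℝ) ≤ (n:ℝ)+1) (by linarith : (0:ℝ) ≤ S - ((n:ℝ)-1))]
  · rw [hLHS, div_eq_div_iff hd.ne' hn1.ne', ← hkey, ← hSeq_iff]
    constructor
    · intro hEq
      have h3 : S * ((n:ℝ)+1) = ((n:ℝ)-1) * ((n:ℝ)+1) := by linear_combination (-1/3 : ℝ) * hEq
      exact mul_right_cancel₀ hn1.ne' h3
    · intro hEq
      rw [hEq]; ring
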